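/- Let (Ω, 𝓕, μ) be a probability space, let θ : Ω → Matrix (Fin r) (Fin n) ℝ be measurable, let s ≤ min(r, n), and let G = { ω : rank θ(ω) = s }. Then there exist measurable maps β : Ω → Matrix (Fin r) (Fin s) ℝ and δ : Ω → Matrix (Fin s) (Fin n) ℝ such that for μ-a.e. ω ∈ G one has θ(ω) = β(ω) * δ(ω) and rank δ(ω) = s. -/

import Mathlib

open MeasureTheory

section RankFactAux

open Matrix Set

instance rf_matMeas {a b : ℕ} : MeasurableSpace (Matrix (Fin a) (Fin b) ℝ) :=
  MeasurableSpace.pi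

lemma rf_exists_cols {m k s : ℕ} (A : Matrix (Fin m) (Fin k) ℝ) (h : A.rank = s) :
    ∃ g : Fin s → Fin k, LinearIndependent ℝ (fun j => Aᵀ (g j)) := by
  classical
  have hspan : Module.finrank ℝ (Submodule.span ℝ (Set.range Aᵀ)) = s := by
    rw [← h]; exact (Matrix.rank_eq_finrank_span_cols A).symm
  obtain ⟨b, hb_sub, hb_span, hb_ind⟩ := exists_linearIndependent ℝ (Set.range Aᵀ)
  have hb_fin : b.Finite := (Set.finite_range Aᵀ).subset hb_sub
  haveI := hb_fin.fintype
  have hcard : Fintype.card b = s := by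
    rw [← Set.toFinset_card, ← finrank_span_set_eq_card hb_ind, hb_span, hspan]
  let eb : Fin s ≃ b := (Fintype.equivFinOfCardEq hcard).symm
  have hmem : ∀ x : b, ∃ i, Aᵀ i = (x : Fin m → ℝ) := fun x => hb_sub x.2
  choose gf hgf using hmem
  refine ⟨fun j => gf (eb j), ?_⟩
  have : (fun j => Aᵀ (gf (eb j))) = fun j => ((eb j : b) : Fin m → ℝ) := by
    funext j; exact hgf (eb j)
  rw [this]
  exact hb_ind.comp eb eb.injective

lemma rf_exists_minor {m k s : ℕ} (A : Matrix (Fin m) (Fin k) ℝ) (h : A.rank = s) :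
    ∃ (f : Fin s → Fin m) (g : Fin s → Fin k), (A.submatrix f g).det ≠ 0 := by
  classical
  obtain ⟨g, hg⟩ := rf_exists_cols A h
  set B : Matrix (Fin m) (Fin s) ℝ := A.submatrix id g with hB
  have hBrank : B.rank = s := by
    rw [Matrix.rank_eq_finrank_span_cols]
    have hre : Set.range B.col = Set.range (fun j => Aᵀ (g j)) := rfl
    rw [hre, finrank_span_eq_card hg, Fintype.card_fin]
  have hBTrank : Bᵀ.rank = s := by rw [Matrix.rank_transpose, hBrank]
  obtain ⟨f, hf⟩ := rf_exists_cols Bᵀ hBTrank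
  refine ⟨f, g, ?_⟩
  have hrows : LinearIndependent ℝ (fun j => (A.submatrix f g) j) := hf
  exact isUnit_iff_ne_zero.mp
    ((Matrix.isUnit_iff_isUnit_det _).mp (Matrix.linearIndependent_rows_iff_isUnit.mp hrows))

lemma rf_factor {m k s : ℕ} (A : Matrix (Fin m) (Fin k) ℝ)
    (f : Fin s → Fin m) (g : Fin s → Fin k)
    (hd : (A.submatrix f g).det ≠ 0) (hr : A.rank ≤ s) :
    A = (A.submatrix id g) * ((A.submatrix f g)⁻¹ * A.submatrix f id) ∧
      ((A.submatrix f g)⁻¹ * A.submatrix f id).rank = s := by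
  classical
  set M := A.submatrix f g with hM
  have hMd : IsUnit M.det := isUnit_iff_ne_zero.mpr hd
  have hMu : IsUnit M := (Matrix.isUnit_iff_isUnit_det M).mpr hMd
  have hMcols : LinearIndependent ℝ (fun j => Mᵀ j) :=
    Matrix.linearIndependent_cols_iff_isUnit.mpr hMu
  have hcols : LinearIndependent ℝ (fun j => Aᵀ (g j)) := by
    refine LinearIndependent.of_comp (LinearMap.funLeft ℝ ℝ f) ?_
    have hcomp : ((LinearMap.funLeft ℝ ℝ f) ∘ (fun j => Aᵀ (g j))) = fun j => Mᵀ j := by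
      funext j; funext i; rfl
    rw [hcomp]; exact hMcols
  have hS_le : Submodule.span ℝ (Set.range fun j => Aᵀ (g j)) ≤
      Submodule.span ℝ (Set.range Aᵀ) :=
    Submodule.span_mono (Set.range_comp_subset_range g Aᵀ)
  have hfinW : Module.finrank ℝ (Submodule.span ℝ (Set.range Aᵀ)) ≤ s := by
    exact (Matrix.rank_eq_finrank_span_cols A).symm.le.trans hr
  have hfinS : Module.finrank ℝ (Submodule.span ℝ (Set.range fun j => Aᵀ (g j))) = s := by
    rw [finrank_span_eq_card hcols, Fintype.card_fin]
  have hWS : Submodule.span ℝ (Set.range fun j => Aᵀ (g j)) = Submodule.span ℝ (Set.range Aᵀ) :=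
    Submodule.eq_of_le_of_finrank_le hS_le (by rw [hfinS]; exact hfinW)
  have hex : ∀ j, ∃ c : Fin s → ℝ, ∑ i, c i • Aᵀ (g i) = Aᵀ j := by
    intro j
    refine (Submodule.mem_span_range_iff_exists_fun ℝ).mp ?_
    rw [hWS]
    exact Submodule.subset_span (Set.mem_range_self j)
  choose c hc using hex
  set C : Matrix (Fin s) (Fin k) ℝ := Matrix.of fun i j => c j i with hCdef
  have hAC : A = (A.submatrix id g) * C := by
    ext i j
    have h1 := congrFun (hc j) i
    simp only [Finset.sum_apply, Pi.smul_apply, smul_eq_mul, Matrix.transpose_apply] at h1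
    rw [Matrix.mul_apply]
    simp only [Matrix.submatrix_apply, id_eq, hCdef, Matrix.of_apply]
    rw [← h1]
    exact Finset.sum_congr rfl fun l _ => mul_comm _ _
  have hMC : A.submatrix f id = M * C := by
    ext i j
    have h2 : A (f i) j = ((A.submatrix id g) * C) (f i) j := by rw [← hAC]
    calc A.submatrix f id i j = A (f i) j := rfl
      _ = ((A.submatrix id g) * C) (f i) j := h2
      _ = (M * C) i j := rfl
  have hD : M⁻¹ * A.submatrix f id = C := by
    rw [hMC, ← Matrix.mul_assoc, Matrix.nonsing_inv_mul M hMd, Matrix.one_mul]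
  constructor
  · rw [hD, ← hAC]
  · set D := M⁻¹ * A.submatrix f id with hDdef
    set E : Matrix (Fin k) (Fin s) ℝ := Matrix.of fun j l => if j = g l then 1 else 0 with hEdef
    have hDE : D * E = 1 := by
      have h1 : (A.submatrix f id) * E = M := by
        ext i l
        rw [Matrix.mul_apply]
        simp only [hEdef, Matrix.of_apply, Matrix.submatrix_apply, id_eq, mul_ite, mul_one,
          mul_zero]
        rw [Finset.sum_ite_eq' Finset.univ (g l) (fun j => A (f i) j)]
        simp [hM]
      rw [hDdef, Matrix.mul_assoc, h1, Matrix.nonsing_inv_mul M hMd]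
    have hle1 : s ≤ D.rank := by
      have h2 := Matrix.rank_mul_le_left D E
      rw [hDE, Matrix.rank_one, Fintype.card_fin] at h2
      exact h2
    have hle2 : D.rank ≤ s := by
      have h3 := Matrix.rank_le_card_height D
      rwa [Fintype.card_fin] at h3
    exact le_antisymm hle2 hle1

lemma rf_meas_entry {a b : ℕ} (i : Fin a) (j : Fin b) :
    Measurable fun A : Matrix (Fin a) (Fin b) ℝ => A i j :=
  (measurable_pi_apply j).comp (measurable_pi_apply i)

lemma rf_meas_det {a : ℕ} : Measurable fun A : Matrix (Fin a) (Fin a) ℝ => A.det := by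
  simp only [Matrix.det_apply]
  exact Finset.measurable_sum _ fun σ _ =>
    (Finset.measurable_prod _ fun i _ => rf_meas_entry (σ i) i).const_smul _

lemma rf_meas_submatrix {a b c d : ℕ} (f : Fin c → Fin a) (g : Fin d → Fin b) :
    Measurable fun A : Matrix (Fin a) (Fin b) ℝ => A.submatrix f g :=
  measurable_pi_lambda _ fun i => measurable_pi_lambda _ fun j => rf_meas_entry (f i) (g j)

lemma rf_meas_inv_entry {a : ℕ} (i j : Fin a) :
    Measurable fun A : Matrix (Fin a) (Fin a) ℝ => A⁻¹ i j := by
  simp only [Matrix.inv_def, Matrix.smul_apply, smul_eq_mul, Ring.inverse_eq_inv']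
  refine Measurable.mul rf_meas_det.inv ?_
  simp only [Matrix.adjugate_apply]
  refine rf_meas_det.comp (measurable_pi_lambda _ fun a' => measurable_pi_lambda _ fun b' => ?_)
  by_cases h : a' = j
  · subst h
    simp only [Matrix.updateRow_apply, if_pos rfl]
    exact measurable_const
  · simp only [Matrix.updateRow_apply, if_neg h]
    exact rf_meas_entry a' b'

lemma rf_meas_delta_entry {r n s : ℕ} (f : Fin s → Fin r) (g : Fin s → Fin n)
    (i : Fin s) (j : Fin n) :
    Measurable fun A : Matrix (Fin r) (Fin n) ℝ =>
      ((A.submatrix f g)⁻¹ * A.submatrix f id) i j := by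
  simp only [Matrix.mul_apply]
  exact Finset.measurable_sum _ fun l _ =>
    ((rf_meas_inv_entry i l).comp (rf_meas_submatrix f g)).mul (rf_meas_entry (f l) j)

end RankFactAux

/-- Measurable rank factorization: on the set where a measurable matrix field `θ` has
rank `s`, one can write `θ = β * δ` with measurable factors `β` (r × s) and `δ` (s × n),
`δ` of full rank `s`. -/
theorem stmt_6 {Ω : Type*} [MeasurableSpace Ω] (μ : Measure Ω) [IsProbabilityMeasure μ]
    (r n s : ℕ) (hs : s ≤ min r n) (θ : Ω → Matrix (Fin r) (Fin n) ℝ)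
    (hθ : ∀ i j, Measurable fun ω => θ ω i j)
    (G : Set Ω) (hG : G = {ω | (θ ω).rank = s}) :
    ∃ (β : Ω → Matrix (Fin r) (Fin s) ℝ) (δ : Ω → Matrix (Fin s) (Fin n) ℝ),
      (∀ i j, Measurable fun ω => β ω i j) ∧ (∀ i j, Measurable fun ω => δ ω i j) ∧
      ∀ᵐ ω ∂μ, ω ∈ G → θ ω = β ω * δ ω ∧ (δ ω).rank = s := by
  classical
  subst hG
  set P := (Fin s → Fin r) × (Fin s → Fin n) with hP
  set N := Fintype.card P with hN
  set e : Fin N ≃ P := (Fintype.equivFin P).symm with he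
  set S : Fin N → Set (Matrix (Fin r) (Fin n) ℝ) :=
    fun k => {A | (A.submatrix (e k).1 (e k).2).det ≠ 0} with hSdef
  have hSmeas : ∀ k, MeasurableSet (S k) := by
    intro k
    have : S k = (fun A : Matrix (Fin r) (Fin n) ℝ => (A.submatrix (e k).1 (e k).2).det) ⁻¹'
        ({(0 : ℝ)}ᶜ) := by
      ext A; simp [hSdef]
    rw [this]
    exact (rf_meas_det.comp (rf_meas_submatrix (e k).1 (e k).2))
      (measurableSet_singleton (0 : ℝ)).compl
  set T : Fin N → Set (Matrix (Fin r) (Fin n) ℝ) :=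
    fun k => S k ∩ ⋂ (k' : Fin N) (_ : k' < k), (S k')ᶜ with hTdef
  have hTmeas : ∀ k, MeasurableSet (T k) :=
    fun k => (hSmeas k).inter
      (MeasurableSet.iInter fun k' => MeasurableSet.iInter fun _ => (hSmeas k').compl)
  have hΘ : Measurable θ :=
    measurable_pi_lambda _ fun i => measurable_pi_lambda _ fun j => hθ i j
  refine ⟨fun ω => Matrix.of fun i j =>
      ∑ k, Set.indicator (T k) (fun A => A i ((e k).2 j)) (θ ω),
    fun ω => Matrix.of fun i j =>
      ∑ k, Set.indicator (T k)
        (fun A => ((A.submatrix (e k).1 (e k).2)⁻¹ * A.submatrix (e k).1 id) i j) (θ ω),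
    ?_, ?_, ?_⟩
  · intro i j
    show Measurable fun ω =>
      ∑ k, Set.indicator (T k) (fun A => A i ((e k).2 j)) (θ ω)
    exact Finset.measurable_sum _ fun k _ =>
      (((rf_meas_entry i ((e k).2 j)).indicator (hTmeas k)).comp hΘ)
  · intro i j
    show Measurable fun ω =>
      ∑ k, Set.indicator (T k)
        (fun A => ((A.submatrix (e k).1 (e k).2)⁻¹ * A.submatrix (e k).1 id) i j) (θ ω)
    exact Finset.measurable_sum _ fun k _ =>
      (((rf_meas_delta_entry (e k).1 (e k).2 i j).indicator (hTmeas k)).comp hΘ)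
  · refine Filter.Eventually.of_forall fun ω hω => ?_
    have hrank : (θ ω).rank = s := hω
    obtain ⟨f0, g0, hfg⟩ := rf_exists_minor (θ ω) hrank
    set F : Finset (Fin N) := Finset.univ.filter (fun k => θ ω ∈ S k) with hF
    have hFne : F.Nonempty := by
      refine ⟨e.symm (f0, g0), ?_⟩
      rw [hF, Finset.mem_filter]
      refine ⟨Finset.mem_univ _, ?_⟩
      show ((θ ω).submatrix (e (e.symm (f0, g0))).1 (e (e.symm (f0, g0))).2).det ≠ 0
      rw [e.apply_symm_apply]
      exact hfg
    set k0 := F.min' hFne with hk0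
    have hk0F : k0 ∈ F := F.min'_mem hFne
    have hk0S : θ ω ∈ S k0 := (Finset.mem_filter.mp hk0F).2
    have hk0T : θ ω ∈ T k0 := by
      refine ⟨hk0S, ?_⟩
      simp only [Set.mem_iInter]
      intro k' hk'
      intro hmem
      have : k' ∈ F := by rw [hF, Finset.mem_filter]; exact ⟨Finset.mem_univ _, hmem⟩
      exact absurd (F.min'_le k' this) (not_le.mpr hk')
    have hTother : ∀ k, k ≠ k0 → θ ω ∉ T k := by
      intro k hk hmem
      rcases lt_or_gt_of_ne hk with hlt | hgt
      · have : k ∈ F := by rw [hF, Finset.mem_filter]; exact ⟨Finset.mem_univ _, hmem.1⟩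
        exact absurd (F.min'_le k this) (not_le.mpr hlt)
      · have := hmem.2
        simp only [Set.mem_iInter] at this
        exact this k0 hgt hk0S
    have hβ : (Matrix.of fun i j =>
        ∑ k, Set.indicator (T k) (fun A => A i ((e k).2 j)) (θ ω)) =
        (θ ω).submatrix id (e k0).2 := by
      ext i j
      rw [Matrix.of_apply]
      rw [Finset.sum_eq_single k0
        (fun k _ hk => Set.indicator_of_notMem (hTother k hk) _)
        (fun h => absurd (Finset.mem_univ k0) h)]
      rw [Set.indicator_of_mem hk0T]
      rfl
    have hδ : (Matrix.of fun i j =>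
        ∑ k, Set.indicator (T k)
          (fun A => ((A.submatrix (e k).1 (e k).2)⁻¹ * A.submatrix (e k).1 id) i j) (θ ω)) =
        ((θ ω).submatrix (e k0).1 (e k0).2)⁻¹ * (θ ω).submatrix (e k0).1 id := by
      ext i j
      rw [Matrix.of_apply]
      rw [Finset.sum_eq_single k0
        (fun k _ hk => Set.indicator_of_notMem (hTother k hk) _)
        (fun h => absurd (Finset.mem_univ k0) h)]
      rw [Set.indicator_of_mem hk0T]
    obtain ⟨hfac, hrk⟩ := rf_factor (θ ω) (e k0).1 (e k0).2 hk0S (le_of_eq hrank)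
    constructor
    · have h := hfac
      rw [← hβ, ← hδ] at h
      exact h
    · have h := hrk
      rw [← hδ] at h
      exact h
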